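/- Let D and D' be unconditionally equivalent DAGs on the same finite vertex set V, and suppose both are maximal in their unconditional equivalence class, i.e., no DAG obtained from D (respectively D') by adding a single directed edge is unconditionally equivalent to it. Then D and D' have the same skeleton: for all distinct u, v, the nodes u and v are adjacent in D if and only if they are adjacent in D'. -/

import Mathlib

namespace UEC

variable {V : Type*}

/-- A directed graph is a DAG if it has no directed cycles. -/
def IsDAG (D : Digraph V) : Prop := ∀ v : V, ¬ Relation.TransGen D.Adj v v

/-- `an D v` : the set of ancestors of `v` (nodes with a directed path to `v`),
including `v` itself. -/
def an (D : Digraph V) (v : V) : Set V := {u | Relation.ReflTransGen D.Adj u v}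

/-- `de D v` : the set of descendants of `v` (nodes reachable by a directed path
from `v`), including `v` itself. -/
def de (D : Digraph V) (v : V) : Set V := {u | Relation.ReflTransGen D.Adj v u}

/-- `pa D v` : the set of parents of `v`. -/
def pa (D : Digraph V) (v : V) : Set V := {u | D.Adj u v}

/-- A source node is a node with no parents. -/
def IsSource (D : Digraph V) (v : V) : Prop := pa D v = ∅

/-- `sources D` : the set of source nodes of `D` (denoted `ma_D(V)` in the paper). -/
def sources (D : Digraph V) : Set V := {v | IsSource D v}

/-- Ancestors of a set of nodes. -/
def anSet (D : Digraph V) (A : Set V) : Set V := ⋃ a ∈ A, an D a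

/-- `maSet D A = {u ∈ an_D(A) : an_D(u) = {u}}`, the source nodes that are
ancestors of `A`. -/
def maSet (D : Digraph V) (A : Set V) : Set V :=
  {u | u ∈ anSet D A ∧ an D u = {u}}

/-- Two nodes are adjacent in a digraph if there is an edge between them in
either direction. -/
def Adjacent (D : Digraph V) (v w : V) : Prop := D.Adj v w ∨ D.Adj w v

/-- A trek in `D` is a path over distinct vertices (given as the list of its
vertices, consecutive ones being adjacent) containing no collider
`p i → p (i+1) ← p (i+2)` as a subpath. -/
def IsTrekList (D : Digraph V) (p : List V) : Prop :=
  p.Nodup ∧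
    (∀ i : ℕ, (h : i + 1 < p.length) →
      (D.Adj (p.get ⟨i, by omega⟩) (p.get ⟨i + 1, h⟩) ∨
        D.Adj (p.get ⟨i + 1, h⟩) (p.get ⟨i, by omega⟩))) ∧
    (∀ i : ℕ, (h : i + 2 < p.length) →
      ¬(D.Adj (p.get ⟨i, by omega⟩) (p.get ⟨i + 1, by omega⟩) ∧
        D.Adj (p.get ⟨i + 2, h⟩) (p.get ⟨i + 1, by omega⟩)))

/-- There is a trek between `v` and `w` in `D`. -/
def HasTrek (D : Digraph V) (v w : V) : Prop :=
  ∃ p : List V, IsTrekList D p ∧ p.head? = some v ∧ p.getLast? = some w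

/-- Adjacency in the unconditional dependence graph `U^D` : two distinct nodes
are adjacent iff there is a trek between them. -/
def UAdj (D : Digraph V) (v w : V) : Prop :=
  v ≠ w ∧ (HasTrek D v w ∨ HasTrek D w v)

/-- Two digraphs on the same vertex set are unconditionally equivalent if for
all distinct nodes there is a trek between them in one iff there is one in the
other. -/
def UncondEquiv (D D' : Digraph V) : Prop :=
  ∀ v w : V, v ≠ w → (HasTrek D v w ↔ HasTrek D' v w)

/-- The digraph obtained by adding the edge `v → w`. -/
def addEdge (D : Digraph V) (v w : V) : Digraph V :=
  ⟨fun a b => D.Adj a b ∨ (a = v ∧ b = w)⟩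

/-- The digraph obtained by deleting the edge `v → w`. -/
def delEdge (D : Digraph V) (v w : V) : Digraph V :=
  ⟨fun a b => D.Adj a b ∧ ¬(a = v ∧ b = w)⟩

/-- The digraph obtained by replacing the edge `v → w` with `w → v`. -/
def revEdge (D : Digraph V) (v w : V) : Digraph V :=
  ⟨fun a b => (D.Adj a b ∧ ¬(a = v ∧ b = w)) ∨ (a = w ∧ b = v)⟩

/-- The ordered pair `(v, w)` is partially weakly covered in `D`. -/
def PartiallyWeaklyCovered (D : Digraph V) (v w : V) : Prop :=
  maSet D {v} ⊆ maSet D {w} ∧ v ∉ an D w ∧ w ∉ an D v ∧ pa D v ≠ ∅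

/-- The ordered pair `(v, w)` is implied by transitivity in `D`, i.e.
`v ∈ an_D(w) \ ({w} ∪ pa_D(w))`. -/
def ImpliedByTransitivity (D : Digraph V) (v w : V) : Prop :=
  v ∈ an D w \ ({w} ∪ pa D w)

/-- The edge `v → w` is weakly covered in `D`. -/
def WeaklyCovered (D : Digraph V) (v w : V) : Prop :=
  maSet D (pa D v) = maSet D (pa D w \ {v}) ∧ v ∉ anSet D (pa D w \ {v})

/-- A DAG is maximal in its unconditional equivalence class if no digraph
obtained from it by adding a single directed edge is a DAG unconditionally
equivalent to it. -/
def MaximalInUEC (D : Digraph V) : Prop :=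
  ∀ a b : V, ¬ D.Adj a b →
    ¬ (IsDAG (addEdge D a b) ∧ UncondEquiv D (addEdge D a b))


section AuxLemmas
variable {D : Digraph V}

lemma no_two_cycle (hD : IsDAG D) {a b : V} (h1 : D.Adj a b) (h2 : D.Adj b a) : False :=
  hD a (Relation.TransGen.head h1 (Relation.TransGen.single h2))

lemma transGen_of_reach_ne {a b : V} (hab : Relation.ReflTransGen D.Adj a b) (hne : a ≠ b) :
    Relation.TransGen D.Adj a b := by
  rcases (Relation.reflTransGen_iff_eq_or_transGen.mp hab) with h | h
  · exact absurd h.symm hne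
  · exact h

lemma reach_source_eq {m t : V} (hs : pa D m = ∅) (h : Relation.ReflTransGen D.Adj t m) :
    t = m := by
  rcases h.cases_tail with h | ⟨c, _, hc⟩
  · exact h.symm
  · exact absurd hc (by
      rw [Set.eq_empty_iff_forall_notMem] at hs
      exact hs c)

lemma exists_nodup_chain {a b : V} (h : Relation.ReflTransGen D.Adj a b) :
    ∃ P : List V, P.head? = some a ∧ P.getLast? = some b ∧ P.Chain' D.Adj ∧ P.Nodup := by
  induction h using Relation.ReflTransGen.head_induction_on with
  | refl => exact ⟨[b], rfl, rfl, List.isChain_singleton b, List.nodup_singleton b⟩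
  | head h' _ ih =>
    rename_i a c _
    obtain ⟨P, hh, hl, hc, hn⟩ := ih
    by_cases ha : a ∈ P
    · obtain ⟨s, u, rfl⟩ := List.append_of_mem ha
      refine ⟨a :: u, rfl, ?_, ?_, ?_⟩
      · rwa [List.getLast?_append_cons] at hl
      · exact ((List.isChain_split).mp hc).2
      · exact hn.sublist (List.sublist_append_right s (a :: u))
    · obtain ⟨P, rfl⟩ : ∃ P', P = c :: P' := by
        cases P with
        | nil => simp at hh
        | cons p0 P' => simp only [List.head?_cons, Option.some.injEq] at hh; exact ⟨P', by rw [hh]⟩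
      refine ⟨a :: c :: P, rfl, by simpa using hl, ?_, ?_⟩
      · exact List.isChain_cons_cons.mpr ⟨h', hc⟩
      · exact List.nodup_cons.mpr ⟨ha, hn⟩

lemma IsTrekList.tail {p : List V} {a : V} (h : IsTrekList D (a :: p)) : IsTrekList D p := by
  obtain ⟨hn, he, hc⟩ := h
  refine ⟨hn.of_cons, fun i hi => ?_, fun i hi => ?_⟩
  · have := he (i + 1) (by simpa using Nat.succ_lt_succ hi)
    simpa using this
  · have := hc (i + 1) (by simp only [List.length_cons]; omega)
    simpa using this

lemma trek_allR : ∀ (q : List V) (a b y : V), IsTrekList D (a :: b :: q) →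
    D.Adj a b → (a :: b :: q).getLast? = some y → Relation.ReflTransGen D.Adj b y := by
  intro q
  induction q with
  | nil =>
    intro a b y _ _ hl
    simp only [List.getLast?_cons_cons, List.getLast?_singleton, Option.some.injEq] at hl
    exact hl ▸ Relation.ReflTransGen.refl
  | cons c q ih =>
    intro a b y ht hab hl
    have hnc : ¬ D.Adj c b := by
      have := ht.2.2 0 (by simp)
      simp only [List.get] at this
      tauto
    have hbc : D.Adj b c := by
      have := ht.tail.2.1 0 (by simp)
      simp only [List.get] at this
      tauto
    have := ih b c y ht.tail hbc (by simpa using hl)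
    exact Relation.ReflTransGen.head hbc this

lemma trek_common : ∀ (p : List V) (x y : V), IsTrekList D p → p.head? = some x →
    p.getLast? = some y →
    ∃ t, Relation.ReflTransGen D.Adj t x ∧ Relation.ReflTransGen D.Adj t y := by
  intro p
  induction p with
  | nil => intro x y _ hh _; simp at hh
  | cons a q ih =>
    intro x y ht hh hl
    simp only [List.head?_cons, Option.some.injEq] at hh
    subst hh
    cases q with
    | nil =>
      simp only [List.getLast?_singleton, Option.some.injEq] at hl
      exact ⟨a, Relation.ReflTransGen.refl, hl ▸ Relation.ReflTransGen.refl⟩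
    | cons b q' =>
      have hedge := ht.2.1 0 (by simp)
      simp only [List.get] at hedge
      rcases hedge with hab | hba
      · have := trek_allR q' a b y ht hab hl
        exact ⟨a, Relation.ReflTransGen.refl, Relation.ReflTransGen.head hab this⟩
      · obtain ⟨t, h1, h2⟩ := ih b y ht.tail rfl (by simpa using hl)
        exact ⟨t, h1.tail hba, h2⟩

lemma isTrekList_of_chains (hD : IsDAG D) {l r : List V} {t : V}
    (hl : List.Chain' (fun a b => D.Adj b a) (l ++ [t]))
    (hr : List.Chain' D.Adj (t :: r))
    (hnd : (l ++ t :: r).Nodup) :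
    IsTrekList D (l ++ t :: r) := by
  have hplen : (l ++ t :: r).length = l.length + r.length + 1 := by simp; omega
  have hgetL : ∀ (j : ℕ) (hj : j ≤ l.length) (hj' : j < (l ++ t :: r).length),
      (l ++ t :: r)[j] = (l ++ [t])[j]'(by simp; omega) := by
    intro j hj hj'
    rcases Nat.lt_or_ge j l.length with hlt | hge
    · rw [List.getElem_append_left hlt, List.getElem_append_left hlt]
    · have hje : j = l.length := le_antisymm hj hge
      subst hje
      rw [List.getElem_append_right (le_refl _), List.getElem_append_right (le_refl _)]
      simp
  have hgetR : ∀ (j : ℕ) (hj : l.length ≤ j) (hj' : j < (l ++ t :: r).length),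
      (l ++ t :: r)[j] = (t :: r)[j - l.length]'(by simp at hj' ⊢; omega) := by
    intro j hj hj'
    rw [List.getElem_append_right hj]
  have hA : ∀ (j : ℕ) (hj : j < l.length) (hj' : j + 1 < (l ++ t :: r).length),
      D.Adj ((l ++ t :: r)[j+1]) ((l ++ t :: r)[j]'(by omega)) := by
    intro j hj hj'
    have hc := List.isChain_iff_getElem.mp hl j (by simp; omega)
    rw [hgetL j (le_of_lt hj) (by omega), hgetL (j+1) (by omega) hj']
    exact hc
  have hB : ∀ (j : ℕ) (hj : l.length ≤ j) (hj' : j + 1 < (l ++ t :: r).length),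
      D.Adj ((l ++ t :: r)[j]'(by omega)) ((l ++ t :: r)[j+1]) := by
    intro j hj hj'
    have hc := List.isChain_iff_getElem.mp hr (j - l.length) (by simp at hj' ⊢; omega)
    rw [hgetR j hj (by omega), hgetR (j+1) (by omega) hj']
    have he : j + 1 - l.length = (j - l.length) + 1 := by omega
    simp_rw [he]
    exact hc
  refine ⟨hnd, fun i hi => ?_, fun i hi => ?_⟩
  · simp only [List.get_eq_getElem]
    rcases Nat.lt_or_ge i l.length with hlt | hge
    · exact Or.inr (hA i hlt hi)
    · exact Or.inl (hB i hge hi)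
  · simp only [List.get_eq_getElem]
    rintro ⟨h1, h2⟩
    rcases Nat.lt_or_ge i l.length with hlt | hge
    · exact no_two_cycle hD h1 (hA i hlt (by omega))
    · exact no_two_cycle hD (hB (i+1) (by omega) hi) h2

lemma hasTrek_of_chains (hD : IsDAG D) :
    ∀ (n : ℕ) (P Q : List V) (t x y : V), P.length + Q.length ≤ n →
    P.head? = some t → Q.head? = some t → P.getLast? = some x → Q.getLast? = some y →
    P.Chain' D.Adj → Q.Chain' D.Adj → P.Nodup → Q.Nodup → HasTrek D x y := by
  intro n
  induction n with
  | zero =>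
    intro P Q t x y hlen hP hQ hPl hQl hPc hQc hPn hQn
    cases P with
    | nil => simp at hP
    | cons a P' => simp at hlen
  | succ n ih =>
    intro P Q t x y hlen hP hQ hPl hQl hPc hQc hPn hQn
    by_cases hz : ∃ z, z ∈ P ∧ z ∈ Q ∧ z ≠ t
    · obtain ⟨z, hzP, hzQ, hzt⟩ := hz
      obtain ⟨s₁, u₁, rfl⟩ := List.append_of_mem hzP
      obtain ⟨s₂, u₂, rfl⟩ := List.append_of_mem hzQ
      have hs₁ : s₁ ≠ [] := by rintro rfl; simp at hP; exact hzt hP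
      have hs₂ : s₂ ≠ [] := by rintro rfl; simp at hQ; exact hzt hQ
      refine ih (z :: u₁) (z :: u₂) z x y ?_ rfl rfl ?_ ?_ ?_ ?_ ?_ ?_
      · have l1 : 1 ≤ s₁.length := by
          cases s₁ with
          | nil => exact absurd rfl hs₁
          | cons _ _ => simp
        have l2 : 1 ≤ s₂.length := by
          cases s₂ with
          | nil => exact absurd rfl hs₂
          | cons _ _ => simp
        simp only [List.length_append, List.length_cons] at hlen ⊢
        omega
      · rwa [List.getLast?_append_cons] at hPl
      · rwa [List.getLast?_append_cons] at hQl
      · exact (List.isChain_split.mp hPc).2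
      · exact (List.isChain_split.mp hQc).2
      · exact hPn.sublist (List.sublist_append_right s₁ _)
      · exact hQn.sublist (List.sublist_append_right s₂ _)
    · push_neg at hz
      obtain ⟨P', rfl⟩ : ∃ P', P = t :: P' := by
        cases P with
        | nil => simp at hP
        | cons p0 P' =>
          simp only [List.head?_cons, Option.some.injEq] at hP
          exact ⟨P', by rw [hP]⟩
      obtain ⟨Q', rfl⟩ : ∃ Q', Q = t :: Q' := by
        cases Q with
        | nil => simp at hQ
        | cons q0 Q' =>
          simp only [List.head?_cons, Option.some.injEq] at hQ
          exact ⟨Q', by rw [hQ]⟩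
      refine ⟨P'.reverse ++ t :: Q', isTrekList_of_chains hD ?_ hQc ?_, ?_, ?_⟩
      · rw [← List.reverse_cons]
        exact List.isChain_reverse.mpr hPc
      · rw [List.nodup_append]
        refine ⟨List.nodup_reverse.mpr hPn.of_cons, hQn, ?_⟩
        intro a haP b haQ hab
        subst hab
        have haP' : a ∈ P' := List.mem_reverse.mp haP
        have hat : a = t := hz a (List.mem_cons_of_mem t haP') haQ
        subst hat
        exact (List.nodup_cons.mp hPn).1 haP'
      · cases P' with
        | nil =>
          simp only [List.getLast?_singleton, Option.some.injEq] at hPl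
          simp [hPl]
        | cons p1 P'' =>
          rw [List.head?_append_of_ne_nil _ (by simp), List.head?_reverse]
          rwa [List.getLast?_cons_cons] at hPl
      · rwa [List.getLast?_append_cons]

lemma hasTrek_iff (hD : IsDAG D) {x y : V} :
    HasTrek D x y ↔ ∃ t, Relation.ReflTransGen D.Adj t x ∧ Relation.ReflTransGen D.Adj t y := by
  constructor
  · rintro ⟨p, ht, hh, hl⟩
    exact trek_common p x y ht hh hl
  · rintro ⟨t, h1, h2⟩
    obtain ⟨P, hP1, hP2, hP3, hP4⟩ := exists_nodup_chain h1
    obtain ⟨Q, hQ1, hQ2, hQ3, hQ4⟩ := exists_nodup_chain h2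
    exact hasTrek_of_chains hD (P.length + Q.length) P Q t x y le_rfl hP1 hQ1 hP2 hQ2 hP3 hQ3 hP4 hQ4

lemma reach_addEdge_mono {a b x y : V} (h : Relation.ReflTransGen D.Adj x y) :
    Relation.ReflTransGen (addEdge D a b).Adj x y :=
  Relation.ReflTransGen.mono (p := (addEdge D a b).Adj) (fun _ _ hxy => Or.inl hxy) _ _ h

lemma reach_of_reach_addEdge {a b : V} (hab : Relation.ReflTransGen D.Adj a b) {x y : V}
    (h : Relation.ReflTransGen (addEdge D a b).Adj x y) : Relation.ReflTransGen D.Adj x y := by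
  induction h with
  | refl => exact Relation.ReflTransGen.refl
  | tail h1 h2 ih =>
    rcases h2 with h2 | ⟨rfl, rfl⟩
    · exact ih.tail h2
    · exact ih.trans hab

lemma isDAG_addEdge_of_reach (hD : IsDAG D) {a b : V}
    (hab : Relation.ReflTransGen D.Adj a b) (hne : a ≠ b) : IsDAG (addEdge D a b) := by
  intro z hz
  obtain ⟨c, hzc, hcz⟩ := Relation.TransGen.tail'_iff.mp hz
  have hzc' : Relation.ReflTransGen D.Adj z c := reach_of_reach_addEdge hab hzc
  rcases hcz with hcz | ⟨he1, he2⟩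
  · exact hD z (Relation.TransGen.tail' hzc' hcz)
  · subst he1; subst he2
    exact hD _ ((transGen_of_reach_ne hab hne).trans_right hzc')

lemma reach_addEdge_iff {a b : V} (hn : ¬ Relation.ReflTransGen D.Adj b a) {x y : V} :
    Relation.ReflTransGen (addEdge D a b).Adj x y ↔
      Relation.ReflTransGen D.Adj x y ∨
        (Relation.ReflTransGen D.Adj x a ∧ Relation.ReflTransGen D.Adj b y) := by
  constructor
  · intro h
    induction h with
    | refl => exact Or.inl Relation.ReflTransGen.refl
    | tail h1 h2 ih =>
      rcases h2 with h2 | ⟨rfl, rfl⟩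
      · rcases ih with ih | ⟨iha, ihb⟩
        · exact Or.inl (ih.tail h2)
        · exact Or.inr ⟨iha, ihb.tail h2⟩
      · rcases ih with ih | ⟨iha, ihb⟩
        · exact Or.inr ⟨ih, Relation.ReflTransGen.refl⟩
        · exact absurd ihb hn
  · rintro (h | ⟨h1, h2⟩)
    · exact reach_addEdge_mono h
    · exact (reach_addEdge_mono h1).trans
        (Relation.ReflTransGen.head (Or.inr ⟨rfl, rfl⟩) (reach_addEdge_mono h2))

lemma isDAG_addEdge_of_not_reach (hD : IsDAG D) {a b : V}
    (hn : ¬ Relation.ReflTransGen D.Adj b a) : IsDAG (addEdge D a b) := by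
  intro z hz
  obtain ⟨c, hzc, hcz⟩ := Relation.TransGen.tail'_iff.mp hz
  rcases hcz with hcz | ⟨he1, he2⟩
  · rcases (reach_addEdge_iff hn).mp hzc with h | ⟨h1, h2⟩
    · exact hD z (Relation.TransGen.tail' h hcz)
    · exact hn ((h2.tail hcz).trans h1)
  · subst he1; subst he2
    rcases (reach_addEdge_iff hn).mp hzc with h | ⟨h1, h2⟩
    · exact hn h
    · exact hn h1

lemma uncondEquiv_addEdge_of_reach (hD : IsDAG D) {a b : V}
    (hab : Relation.ReflTransGen D.Adj a b) (hne : a ≠ b) :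
    UncondEquiv D (addEdge D a b) := by
  intro v w _
  rw [hasTrek_iff hD, hasTrek_iff (isDAG_addEdge_of_reach hD hab hne)]
  constructor
  · rintro ⟨t, h1, h2⟩
    exact ⟨t, reach_addEdge_mono h1, reach_addEdge_mono h2⟩
  · rintro ⟨t, h1, h2⟩
    exact ⟨t, reach_of_reach_addEdge hab h1, reach_of_reach_addEdge hab h2⟩

lemma exists_source_ancestor [Finite V] (hD : IsDAG D) (v : V) :
    ∃ m, Relation.ReflTransGen D.Adj m v ∧ pa D m = ∅ := by
  have : IsTrans V (Relation.TransGen D.Adj) := ⟨fun _ _ _ h1 h2 => h1.trans h2⟩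
  have : IsIrrefl V (Relation.TransGen D.Adj) := ⟨hD⟩
  have hwf : WellFounded (Relation.TransGen D.Adj) :=
    Finite.wellFounded_of_trans_of_irrefl _
  refine hwf.induction (C := fun v => ∃ m, Relation.ReflTransGen D.Adj m v ∧ pa D m = ∅) v ?_
  intro x IH
  by_cases hx : pa D x = ∅
  · exact ⟨x, Relation.ReflTransGen.refl, hx⟩
  · obtain ⟨p, hp⟩ : ∃ p, D.Adj p x := by
      rw [← Set.not_nonempty_iff_eq_empty, not_not] at hx
      exact hx
    obtain ⟨m, hm1, hm2⟩ := IH p (Relation.TransGen.single hp)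
    exact ⟨m, hm1.tail hp, hm2⟩

lemma core [Finite V] {D D' : Digraph V} (hD : IsDAG D) (hD' : IsDAG D')
    (h : UncondEquiv D D') (hmax' : MaximalInUEC D') {u v : V} (huv : u ≠ v)
    (hadj : D.Adj u v) : Adjacent D' u v := by
  by_contra hna
  rw [Adjacent, not_or] at hna
  obtain ⟨hna1, hna2⟩ := hna
  have H : ∀ m, pa D' m = ∅ → Relation.ReflTransGen D'.Adj m u →
      Relation.ReflTransGen D'.Adj m v := by
    intro m hm hmu
    by_cases hmv : m = v
    · exact hmv ▸ Relation.ReflTransGen.refl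
    by_cases hmu' : m = u
    · subst hmu'
      have h1 : HasTrek D' m v := (h m v hmv).mp
        ((hasTrek_iff hD).mpr ⟨m, Relation.ReflTransGen.refl, Relation.ReflTransGen.single hadj⟩)
      obtain ⟨t, ht1, ht2⟩ := (hasTrek_iff hD').mp h1
      exact (reach_source_eq hm ht1) ▸ ht2
    · have h1 : HasTrek D' m u :=
        (hasTrek_iff hD').mpr ⟨m, Relation.ReflTransGen.refl, hmu⟩
      have h2 : HasTrek D m u := (h m u hmu').mpr h1
      obtain ⟨s, hs1, hs2⟩ := (hasTrek_iff hD).mp h2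
      have h3 : HasTrek D m v := (hasTrek_iff hD).mpr ⟨s, hs1, hs2.tail hadj⟩
      obtain ⟨t, ht1, ht2⟩ := (hasTrek_iff hD').mp ((h m v hmv).mp h3)
      exact (reach_source_eq hm ht1) ▸ ht2
  by_cases hvu : Relation.ReflTransGen D'.Adj v u
  · exact hmax' v u hna2
      ⟨isDAG_addEdge_of_reach hD' hvu (Ne.symm huv), uncondEquiv_addEdge_of_reach hD' hvu (Ne.symm huv)⟩
  · refine hmax' u v hna1 ⟨isDAG_addEdge_of_not_reach hD' hvu, ?_⟩
    have hDAGp := isDAG_addEdge_of_not_reach hD' hvu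
    intro x y hxy
    rw [hasTrek_iff hD', hasTrek_iff hDAGp]
    constructor
    · rintro ⟨t, h1, h2⟩
      exact ⟨t, reach_addEdge_mono h1, reach_addEdge_mono h2⟩
    · rintro ⟨t, h1, h2⟩
      rw [reach_addEdge_iff hvu] at h1 h2
      rcases h1 with h1 | ⟨h1a, h1b⟩
      · rcases h2 with h2 | ⟨h2a, h2b⟩
        · exact ⟨t, h1, h2⟩
        · obtain ⟨m, hm1, hm2⟩ := exists_source_ancestor hD' t
          exact ⟨m, hm1.trans h1, (H m hm2 (hm1.trans h2a)).trans h2b⟩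
      · obtain ⟨m, hm1, hm2⟩ := exists_source_ancestor hD' t
        have hmv' := H m hm2 (hm1.trans h1a)
        rcases h2 with h2 | ⟨h2a, h2b⟩
        · exact ⟨m, hmv'.trans h1b, hm1.trans h2⟩
        · exact ⟨m, hmv'.trans h1b, hmv'.trans h2b⟩

lemma Adjacent.symm' {D : Digraph V} {u v : V} (h : Adjacent D u v) : Adjacent D v u :=
  h.elim Or.inr Or.inl

end AuxLemmas

/-- Two unconditionally equivalent DAGs on the same finite
vertex set that are both maximal in their unconditional equivalence class have
the same skeleton. -/
theorem maximal_same_skeleton [Fintype V] (D D' : Digraph V) (hD : IsDAG D)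
    (hD' : IsDAG D') (h : UncondEquiv D D') (hmax : MaximalInUEC D)
    (hmax' : MaximalInUEC D') :
    ∀ u v : V, u ≠ v → (Adjacent D u v ↔ Adjacent D' u v) := by
  intro u v huv
  have h' : UncondEquiv D' D := fun a b hab => (h a b hab).symm
  constructor
  · rintro (hadj | hadj)
    · exact core hD hD' h hmax' huv hadj
    · exact (core hD hD' h hmax' (Ne.symm huv) hadj).symm'
  · rintro (hadj | hadj)
    · exact core hD' hD h' hmax huv hadj
    · exact (core hD' hD h' hmax (Ne.symm huv) hadj).symm'

end UEC
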